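/- There exists a constant C > 0 such that for every measurable w : ℝ³×ℝ³ → ℝ with ‖w‖_X < ∞, the function n[w](x) := ∫_{ℝ³} w(x,v) dv is defined for almost every x ∈ ℝ³, belongs to L²(ℝ³), and satisfies ‖n[w]‖_{L²(ℝ³)} ≤ C ‖w‖_X. -/

import Mathlib

open MeasureTheory Real Filter ENNReal

noncomputable section

abbrev E3 := EuclideanSpace ℝ (Fin 3)

/-- The weighted `X`-norm `‖w‖_X = (∫∫ |w(x,v)|² (1+|v|²)² dx dv)^{1/2}`. -/
def Xnorm (w : E3 × E3 → ℝ) : ℝ≥0∞ :=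
  (∫⁻ p : E3 × E3, (‖w p‖₊ : ℝ≥0∞) ^ 2 * ENNReal.ofReal ((1 + ‖p.2‖ ^ 2) ^ 2)) ^ (1/2 : ℝ)

/-- The weight function. -/
def Wt (v : E3) : ℝ≥0∞ := ENNReal.ofReal ((1 + ‖v‖ ^ 2) ^ 2)

lemma Wt_pos (v : E3) : (0:ℝ) < (1 + ‖v‖ ^ 2) ^ 2 := by positivity

lemma Wt_ne_zero (v : E3) : Wt v ≠ 0 := by
  simp [Wt, ENNReal.ofReal_eq_zero, not_le, Wt_pos v, (by positivity : (1:ℝ) + ‖v‖ ^ 2 ≠ 0)]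

lemma Wt_ne_top (v : E3) : Wt v ≠ ⊤ := ENNReal.ofReal_ne_top

lemma Wt_measurable : Measurable Wt := by
  apply Measurable.ennreal_ofReal
  fun_prop

/-- Finiteness of `∫ (1+|v|²)^{-2} dv` in dimension 3. -/
lemma K_lt_top : (∫⁻ v : E3, (Wt v)⁻¹) < ⊤ := by
  have hint : Integrable (fun v : E3 => ((1:ℝ) + ‖v‖ ^ 2) ^ (-(4:ℝ) / 2)) volume := by
    apply integrable_rpow_neg_one_add_norm_sq
    simp only [finrank_euclideanSpace, Fintype.card_fin]
    norm_num
  have h2 : (∫⁻ v : E3, ENNReal.ofReal (((1:ℝ) + ‖v‖ ^ 2) ^ (-(4:ℝ) / 2))) < ⊤ :=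
    hint.lintegral_lt_top
  refine lt_of_eq_of_lt ?_ h2
  refine lintegral_congr fun v => ?_
  rw [Wt, ← ENNReal.ofReal_inv_of_pos (Wt_pos v)]
  congr 1
  have hb : (0:ℝ) < 1 + ‖v‖ ^ 2 := by positivity
  rw [show (-(4:ℝ)/2) = -(2:ℝ) by norm_num, Real.rpow_neg hb.le,
    show ((2:ℝ)) = ((2:ℕ):ℝ) by norm_num, Real.rpow_natCast]

/-- Prop. 2.1: for `w ∈ X`, the density `n[w](x) = ∫ w(x,v) dv` is defined a.e.,
belongs to `L²(ℝ³)` and `‖n[w]‖_{L²} ≤ C ‖n[w]‖...` -/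
theorem density_L2_bound :
    ∃ C : ℝ, 0 < C ∧
      ∀ w : E3 × E3 → ℝ, Measurable w → Xnorm w < ⊤ →
        (∀ᵐ x : E3, Integrable (fun v : E3 => w (x, v))) ∧
        MemLp (fun x : E3 => ∫ v : E3, w (x, v)) 2 volume ∧
        eLpNorm (fun x : E3 => ∫ v : E3, w (x, v)) 2 volume ≤ ENNReal.ofReal C * Xnorm w := by
  set K : ℝ≥0∞ := ∫⁻ v : E3, (Wt v)⁻¹ with hKdef
  have hK : K < ⊤ := K_lt_top
  have hKhalf : K ^ (1/2 : ℝ) ≠ ⊤ := by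
    exact (ENNReal.rpow_lt_top_of_nonneg (by norm_num) hK.ne).ne
  set C : ℝ := (K ^ (1/2 : ℝ)).toReal + 1 with hCdef
  have hCpos : 0 < C := by positivity
  have hKC : K ^ (1/2 : ℝ) ≤ ENNReal.ofReal C := by
    rw [← ENNReal.ofReal_toReal hKhalf]
    exact ENNReal.ofReal_le_ofReal (by simp [hCdef])
  refine ⟨C, hCpos, fun w hw hX => ?_⟩
  -- the total weighted integral
  set I : ℝ≥0∞ := ∫⁻ p : E3 × E3, (‖w p‖₊ : ℝ≥0∞) ^ 2 * Wt p.2 with hIdef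
  have hXI : Xnorm w = I ^ (1/2 : ℝ) := rfl
  have hI : I < ⊤ := by
    have := hX
    rw [hXI] at this
    exact (ENNReal.rpow_lt_top_iff_of_pos (by norm_num)).mp this
  -- Tonelli
  set F : E3 → ℝ≥0∞ := fun x => ∫⁻ v : E3, (‖w (x, v)‖₊ : ℝ≥0∞) ^ 2 * Wt v with hFdef
  have hmeas_int : Measurable fun p : E3 × E3 => (‖w p‖₊ : ℝ≥0∞) ^ 2 * Wt p.2 :=
    ((hw.nnnorm.coe_nnreal_ennreal).pow_const 2).mul (Wt_measurable.comp measurable_snd)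
  have hFmeas : Measurable F := hmeas_int.lintegral_prod_right'
  have hIF : I = ∫⁻ x : E3, F x := by
    rw [hIdef, Measure.volume_eq_prod, lintegral_prod _ hmeas_int.aemeasurable]
  have hFae : ∀ᵐ x : E3, F x < ⊤ := by
    apply ae_lt_top hFmeas
    rw [← hIF]; exact hI.ne
  -- pointwise Cauchy-Schwarz
  have hCS : ∀ x : E3,
      (∫⁻ v : E3, (‖w (x, v)‖₊ : ℝ≥0∞)) ≤ (F x) ^ (1/2 : ℝ) * K ^ (1/2 : ℝ) := by
    intro x
    have hwx : Measurable fun v : E3 => w (x, v) := hw.comp measurable_prodMk_left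
    set f : E3 → ℝ≥0∞ := fun v => (‖w (x, v)‖₊ : ℝ≥0∞) * (Wt v) ^ (1/2 : ℝ) with hf
    set g : E3 → ℝ≥0∞ := fun v => ((Wt v) ^ (1/2 : ℝ))⁻¹ with hg
    have hWh_ne_zero : ∀ v, (Wt v) ^ (1/2 : ℝ) ≠ 0 := fun v => by
      simp [ENNReal.rpow_eq_zero_iff, Wt_ne_zero v, Wt_ne_top v]
    have hWh_ne_top : ∀ v, (Wt v) ^ (1/2 : ℝ) ≠ ⊤ := fun v =>
      (ENNReal.rpow_lt_top_of_nonneg (by norm_num) (Wt_ne_top v)).ne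
    have hfg : ∀ v, (f * g) v = (‖w (x, v)‖₊ : ℝ≥0∞) := by
      intro v
      simp only [Pi.mul_apply, hf, hg, mul_assoc]
      rw [ENNReal.mul_inv_cancel (hWh_ne_zero v) (hWh_ne_top v), mul_one]
    have hfm : Measurable f :=
      (hwx.nnnorm.coe_nnreal_ennreal).mul ((Wt_measurable.pow_const _))
    have hgm : Measurable g := (Wt_measurable.pow_const _).inv
    have holder := ENNReal.lintegral_mul_le_Lp_mul_Lq volume
      ((Real.holderConjugate_iff_eq_conjExponent one_lt_two).mpr (by norm_num) : Real.HolderConjugate 2 2) hfm.aemeasurable hgm.aemeasurable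
    have hfL : (∫⁻ v, f v ^ (2:ℝ)) = F x := by
      refine lintegral_congr fun v => ?_
      rw [hf]
      rw [ENNReal.mul_rpow_of_nonneg _ _ (by norm_num : (0:ℝ) ≤ 2),
        ← ENNReal.rpow_natCast (‖w (x, v)‖₊ : ℝ≥0∞) 2,
        ← ENNReal.rpow_mul (Wt v)]
      norm_num
    have hgL : (∫⁻ v, g v ^ (2:ℝ)) = K := by
      refine lintegral_congr fun v => ?_
      show ((Wt v ^ (1/2:ℝ))⁻¹) ^ (2:ℝ) = (Wt v)⁻¹
      rw [ENNReal.inv_rpow, ← ENNReal.rpow_mul]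
      norm_num
    calc (∫⁻ v : E3, (‖w (x, v)‖₊ : ℝ≥0∞))
        = ∫⁻ v : E3, (f * g) v := (lintegral_congr hfg).symm
      _ ≤ (∫⁻ v, f v ^ (2:ℝ)) ^ (1/2:ℝ) * (∫⁻ v, g v ^ (2:ℝ)) ^ (1/2:ℝ) := holder
      _ = (F x) ^ (1/2 : ℝ) * K ^ (1/2 : ℝ) := by rw [hfL, hgL]
  -- a.e. integrability
  have hae : ∀ᵐ x : E3, Integrable (fun v : E3 => w (x, v)) := by
    filter_upwards [hFae] with x hFx
    refine ⟨(hw.comp measurable_prodMk_left).aestronglyMeasurable, ?_⟩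
    rw [HasFiniteIntegral]
    refine lt_of_le_of_lt (hCS x) ?_
    exact ENNReal.mul_lt_top (ENNReal.rpow_lt_top_of_nonneg (by norm_num) hFx.ne)
      (ENNReal.rpow_lt_top_of_nonneg (by norm_num) hK.ne)
  -- L² bound
  set n : E3 → ℝ := fun x => ∫ v : E3, w (x, v) with hn
  have hnmeas : AEStronglyMeasurable n volume :=
    (hw.stronglyMeasurable.integral_prod_right').aestronglyMeasurable
  have hbound : eLpNorm n 2 volume ≤ ENNReal.ofReal C * Xnorm w := by
    rw [eLpNorm_eq_lintegral_rpow_enorm_toReal (by norm_num) (by norm_num)]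
    have h1 : (∫⁻ x : E3, (‖n x‖₊ : ℝ≥0∞) ^ ((2:ℝ≥0∞).toReal)) ≤ I * K := by
      have hptwise : ∀ x : E3, (‖n x‖₊ : ℝ≥0∞) ^ ((2:ℝ≥0∞).toReal) ≤ F x * K := by
        intro x
        have h2 : (‖n x‖₊ : ℝ≥0∞) ≤ ∫⁻ v : E3, (‖w (x, v)‖₊ : ℝ≥0∞) :=
          enorm_integral_le_lintegral_enorm _
        calc (‖n x‖₊ : ℝ≥0∞) ^ ((2:ℝ≥0∞).toReal)
            ≤ ((F x) ^ (1/2 : ℝ) * K ^ (1/2 : ℝ)) ^ ((2:ℝ≥0∞).toReal) := by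
              exact ENNReal.rpow_le_rpow (h2.trans (hCS x)) (by simp)
          _ = F x * K := by
              rw [ENNReal.mul_rpow_of_nonneg _ _ (by simp : (0:ℝ) ≤ (2:ℝ≥0∞).toReal),
                ← ENNReal.rpow_mul, ← ENNReal.rpow_mul]
              norm_num
      calc (∫⁻ x : E3, (‖n x‖₊ : ℝ≥0∞) ^ ((2:ℝ≥0∞).toReal))
          ≤ ∫⁻ x : E3, F x * K := lintegral_mono hptwise
        _ = (∫⁻ x : E3, F x) * K := lintegral_mul_const' K _ hK.ne
        _ = I * K := by rw [hIF]
    calc (∫⁻ x : E3, (‖n x‖₊ : ℝ≥0∞) ^ ((2:ℝ≥0∞).toReal)) ^ (1 / (2:ℝ≥0∞).toReal)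
        ≤ (I * K) ^ (1 / (2:ℝ≥0∞).toReal) := ENNReal.rpow_le_rpow h1 (by simp)
      _ = I ^ (1/2 : ℝ) * K ^ (1/2 : ℝ) := by
          rw [show (1 / (2:ℝ≥0∞).toReal) = (1/2 : ℝ) by simp,
            ENNReal.mul_rpow_of_nonneg _ _ (by norm_num : (0:ℝ) ≤ 1/2)]
      _ = K ^ (1/2 : ℝ) * Xnorm w := by rw [hXI, mul_comm]
      _ ≤ ENNReal.ofReal C * Xnorm w := by gcongr
  refine ⟨hae, ⟨hnmeas, ?_⟩, hbound⟩
  exact lt_of_le_of_lt hbound (ENNReal.mul_lt_top ENNReal.ofReal_lt_top hX)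

end
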